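/- arXiv:2212.08428 — 2 statements merged into one kernel-verified Lean document; each statement's English description precedes it below -/
import Mathlib

section
/- Let (R, m) be a Noetherian local ring, M a finitely generated R-module, and I an ideal of R containing an M-regular element. Then for every integer m ≥ 0 and every M-superficial element x of I, one has (Ĩ^{m+1}_M :_M x) = Ĩ^m_M. -/
/- Preamble: self-contained definitions for reduction numbers, Ratliff-Rush closures,
Castelnuovo-Mumford regularity of blowup modules (via the graded Čech/Koszul-colimit
description of local cohomology with respect to the irrelevant ideal), Hilbert-Samuel
functions/polynomials, postulation numbers, depth, Cohen-Macaulayness, Buchsbaum rings,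
Ulrich ideals, Gorenstein rings, and integral closure of ideals. -/

open Classical

noncomputable section RRPaper

variable {R : Type*} [CommRing R]

/-- The colon submodule `(N :_M J) = { x ∈ M | J • x ⊆ N }`. -/
def mcolon {M : Type*} [AddCommGroup M] [Module R M] (N : Submodule R M) (J : Ideal R) :
    Submodule R M where
  carrier := {x | ∀ a ∈ J, a • x ∈ N}
  add_mem' := by
    intro x y hx hy a ha
    rw [smul_add]; exact N.add_mem (hx a ha) (hy a ha)
  zero_mem' := by intro a ha; rw [smul_zero]; exact N.zero_mem
  smul_mem' := by
    intro c x hx a ha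
    show a • c • x ∈ N
    rw [smul_smul, mul_comm, ← smul_smul]
    exact N.smul_mem c (hx a ha)

/-- The graded piece `I^n M` of the Rees module, for an integer `n` (zero in negative
degrees). -/
def ipow (I : Ideal R) (M : Type*) [AddCommGroup M] [Module R M] (n : ℤ) : Submodule R M :=
  if 0 ≤ n then (I ^ n.toNat) • ⊤ else ⊥

/-- The Ratliff-Rush closure of `I^m` with respect to `M`:
`⋃_{n ≥ 1} (I^{m+n} M :_M I^n)`.  (The union is increasing, hence equals the `iSup`.) -/
def rrc (I : Ideal R) (M : Type*) [AddCommGroup M] [Module R M] (m : ℕ) : Submodule R M :=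
  ⨆ n : ℕ, mcolon ((I ^ (m + n + 1)) • (⊤ : Submodule R M)) (I ^ (n + 1))

/-- `x` is an `M`-superficial element of `I`. -/
def IsSuperficial (I : Ideal R) (M : Type*) [AddCommGroup M] [Module R M] (x : R) : Prop :=
  x ∈ I ∧ ∃ c : ℕ, ∀ n ≥ c,
    mcolon ((I ^ (n + 1)) • (⊤ : Submodule R M)) (Ideal.span {x}) ⊓ ((I ^ c) • ⊤)
      = (I ^ n) • (⊤ : Submodule R M)

/-- `J` is a reduction of `I` relative to `M`: `J ⊆ I` and `J I^n M = I^{n+1} M` for some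
`n ≥ 0`. -/
def IsReduction (J I : Ideal R) (M : Type*) [AddCommGroup M] [Module R M] : Prop :=
  J ≤ I ∧ ∃ n : ℕ, J • ((I ^ n) • (⊤ : Submodule R M)) = (I ^ (n + 1)) • ⊤

/-- The reduction number `r_J(I, M) = min { m | J I^m M = I^{m+1} M }`. -/
def redNum (J I : Ideal R) (M : Type*) [AddCommGroup M] [Module R M] : ℕ :=
  sInf {m : ℕ | J • ((I ^ m) • (⊤ : Submodule R M)) = (I ^ (m + 1)) • ⊤}

/-- `J` is a minimal reduction of `I` relative to `M`. -/
def IsMinReduction (J I : Ideal R) (M : Type*) [AddCommGroup M] [Module R M] : Prop :=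
  IsReduction J I M ∧ ∀ K : Ideal R, IsReduction K I M → K ≤ J → K = J

/-- The reduction number `r(I, M)`: minimum of `r_J(I, M)` over minimal reductions `J`. -/
def redNumAbs (I : Ideal R) (M : Type*) [AddCommGroup M] [Module R M] : ℕ :=
  sInf {r : ℕ | ∃ J : Ideal R, IsMinReduction J I M ∧ redNum J I M = r}

/-- `s*(I, M) = min { n ≥ 1 | Ĩ^i_M = I^i M for all i ≥ n }`. -/
def sStar (I : Ideal R) (M : Type*) [AddCommGroup M] [Module R M] : ℕ :=
  sInf {n : ℕ | 1 ≤ n ∧ ∀ i ≥ n, rrc I M i = (I ^ i) • (⊤ : Submodule R M)}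

section Cech

variable {M : Type*} [AddCommGroup M] [Module R M]

/-- The Koszul-Čech codifferential at stage `t` for the family `a : Fin r → R`:
`(d x) T = ∑_{i ∈ T} (-1)^{#{j ∈ T | j < i}} a_i^t • x (T \ {i})`. -/
def cechD {r : ℕ} (a : Fin r → R) (t : ℕ) :
    (Finset (Fin r) → M) →ₗ[R] (Finset (Fin r) → M) where
  toFun x := fun T =>
    ∑ i ∈ T, (((-1 : R) ^ (T.filter fun j => j < i).card * a i ^ t)) • x (T.erase i)
  map_add' x y := by
    funext T
    simp [smul_add, Finset.sum_add_distrib]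
  map_smul' c x := by
    funext T
    simp only [Pi.smul_apply, RingHom.id_apply, Finset.smul_sum]
    refine Finset.sum_congr rfl fun i _ => ?_
    rw [smul_smul, mul_comm, ← smul_smul]

/-- The transition map from Koszul stage `t` to stage `t + s`: componentwise
multiplication by `(∏_{i ∈ T} a_i)^s`. -/
def cechT {r : ℕ} (a : Fin r → R) (s : ℕ) :
    (Finset (Fin r) → M) →ₗ[R] (Finset (Fin r) → M) where
  toFun x := fun T => ((∏ i ∈ T, a i) ^ s) • x T
  map_add' x y := by funext T; simp [smul_add]
  map_smul' c x := by
    funext T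
    simp only [Pi.smul_apply, RingHom.id_apply]
    rw [smul_smul, mul_comm, ← smul_smul]

/-- `x` is a degree-`n` cochain in homological degree `j` at Koszul stage `t`, for the
grading given by `fil`. -/
def cechChainMem (fil : ℤ → Submodule R M) {r : ℕ} (j t : ℕ) (n : ℤ)
    (x : Finset (Fin r) → M) : Prop :=
  ∀ T : Finset (Fin r),
    (T.card = j → x T ∈ fil (n + (t : ℤ) * (j : ℤ))) ∧ (T.card ≠ j → x T = 0)

/-- `z` is a coboundary (modulo the submodules `sub`) in degree `n`, homological degree
`j`, at Koszul stage `t`. -/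
def cechCobound (fil sub : ℤ → Submodule R M) {r : ℕ} (a : Fin r → R) (j t : ℕ) (n : ℤ)
    (z : Finset (Fin r) → M) : Prop :=
  ∃ y : Finset (Fin r) → M, cechChainMem fil (j - 1) t n y ∧ (j = 0 → y = 0) ∧
    ∀ T : Finset (Fin r), T.card = j →
      z T - cechD a t y T ∈ sub (n + (t : ℤ) * (j : ℤ))

/-- Nonvanishing of the degree-`n` graded piece of the `j`-th local cohomology (with
respect to the irrelevant ideal) of the graded module whose `n`-th piece is
`fil n / sub n` (computed via the colimit over `t` of Koszul cohomologies of the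
families `a^t`): there is a stage-`t` cocycle whose image at every later stage is not a
coboundary. -/
def lcDegNonzero (fil sub : ℤ → Submodule R M) {r : ℕ} (a : Fin r → R) (j : ℕ) (n : ℤ) :
    Prop :=
  ∃ (t : ℕ) (x : Finset (Fin r) → M), cechChainMem fil j t n x ∧
    (∀ T : Finset (Fin r), T.card = j + 1 →
      cechD a t x T ∈ sub (n + (t : ℤ) * ((j : ℤ) + 1))) ∧
    ∀ s : ℕ, ¬ cechCobound fil sub a j (t + s) n (cechT a s x)

/-- The Castelnuovo-Mumford regularity `max_j { a_j + j }` of the graded module with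
pieces `fil n / sub n`, computed with respect to the degree-one "multiplication"
elements `a : Fin r → R`. -/
def cmReg (fil sub : ℤ → Submodule R M) {r : ℕ} (a : Fin r → R) : ℤ :=
  sSup {m : ℤ | ∃ (j : ℕ) (n : ℤ), lcDegNonzero fil sub a j n ∧ m = n + j}

end Cech

/-- The Castelnuovo-Mumford regularity of the Rees module `R(I, M) = ⊕_{n ≥ 0} I^n M`,
computed via a generating family `a` of `I` (whose degree-one elements `a_i t` generate
the irrelevant ideal of the Rees algebra). -/
def regRees (I : Ideal R) (M : Type*) [AddCommGroup M] [Module R M] {r : ℕ}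
    (a : Fin r → R) : ℤ :=
  cmReg (fun n => ipow I M n) (fun _ => ⊥) a

/-- The Castelnuovo-Mumford regularity of the associated graded module
`G(I, M) = ⊕_{n ≥ 0} I^n M / I^{n+1} M`, computed via a generating family `a` of `I`. -/
def regGr (I : Ideal R) (M : Type*) [AddCommGroup M] [Module R M] {r : ℕ}
    (a : Fin r → R) : ℤ :=
  cmReg (fun n => ipow I M n) (fun n => ipow I M (n + 1)) a

/-- Length of a module, as the Krull dimension of its submodule lattice (junk value `0`
for infinite length, extracted as a natural number). -/
def lenNat (R M : Type*) [CommRing R] [AddCommGroup M] [Module R M] : ℕ :=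
  (WithBot.unbotD 0 (Order.krullDim (Submodule R M))).toNat

/-- The Hilbert-Samuel function `H_I(n) = λ(R/I^n)` for `n ≥ 1`, and `0` for `n ≤ 0`. -/
def hilbF (I : Ideal R) (n : ℤ) : ℚ :=
  if 1 ≤ n then (lenNat R (R ⧸ I ^ n.toNat) : ℚ) else 0

/-- The Hilbert-Samuel polynomial of `I`: the polynomial agreeing with `H_I(n)` for all
`n ≫ 0` (junk value `0` if it does not exist). -/
def hsPoly (I : Ideal R) : Polynomial ℚ :=
  if h : ∃ P : Polynomial ℚ, ∃ N : ℤ, ∀ n : ℤ, N ≤ n → P.eval (n : ℚ) = hilbF I n then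
    h.choose
  else 0

/-- The postulation number `ρ(I) = sup { n ∈ ℤ | H_I(n) ≠ P_I(n) }`. -/
def postulation (I : Ideal R) : ℤ :=
  sSup {n : ℤ | hilbF I n ≠ (hsPoly I).eval (n : ℚ)}

/-- The multiplicity `e_0(I)` of an `m`-primary ideal in a `d`-dimensional local ring:
`d!` times the degree-`d` coefficient of the Hilbert-Samuel polynomial. -/
def multNum (I : Ideal R) (d : ℕ) : ℚ :=
  (hsPoly I).coeff d * (Nat.factorial d : ℚ)

/-- `f` is an `M`-regular sequence: each `f i` is a non-zero-divisor modulo the previous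
ones, and `(f) M ≠ M`. -/
def IsRegSeqOn {k : ℕ} (f : Fin k → R) (M : Type*) [AddCommGroup M] [Module R M] : Prop :=
  (Ideal.span (Set.range f)) • (⊤ : Submodule R M) ≠ ⊤ ∧
  ∀ i : Fin k, ∀ m : M,
    f i • m ∈ (Ideal.span (f '' {j | j < i})) • (⊤ : Submodule R M) →
      m ∈ (Ideal.span (f '' {j | j < i})) • (⊤ : Submodule R M)

/-- The depth of `M` over a local ring `R`: the maximal length of an `M`-regular
sequence contained in the maximal ideal. -/
def mdepth (R M : Type*) [CommRing R] [IsLocalRing R] [AddCommGroup M] [Module R M] : ℕ :=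
  sSup {k : ℕ | ∃ f : Fin k → R,
    (∀ i, f i ∈ IsLocalRing.maximalIdeal R) ∧ IsRegSeqOn f M}

/-- The dimension of a module: the Krull dimension of `R / ann M`. -/
def mdim (R M : Type*) [CommRing R] [AddCommGroup M] [Module R M] : WithBot (WithTop ℕ) :=
  ringKrullDim (R ⧸ Module.annihilator R M)

/-- `M` is a Cohen-Macaulay `R`-module of dimension `s`. -/
def IsCMMod (R M : Type*) [CommRing R] [IsLocalRing R] [AddCommGroup M] [Module R M]
    (s : ℕ) : Prop :=
  mdim R M = (s : ℕ) ∧ mdepth R M = s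

/-- A parameter ideal of a `d`-dimensional local ring: generated by `d` elements and
primary to the maximal ideal. -/
def IsParamIdeal [IsLocalRing R] (d : ℕ) (Q : Ideal R) : Prop :=
  (∃ f : Fin d → R, Q = Ideal.span (Set.range f)) ∧
    Q.radical = IsLocalRing.maximalIdeal R

/-- `R` is a Buchsbaum local ring of dimension `d`: the difference
`λ(R/Q) - e_0(Q)` is the same for every parameter ideal `Q`. -/
def IsBuchsbaum (R : Type*) [CommRing R] [IsLocalRing R] (d : ℕ) : Prop :=
  ∃ c : ℚ, ∀ Q : Ideal R, IsParamIdeal d Q → (lenNat R (R ⧸ Q) : ℚ) - multNum Q d = c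

/-- An Ulrich ideal of a `d`-dimensional Cohen-Macaulay local ring: `m`-primary,
containing a parameter ideal `J` as a reduction with `r_J(I) ≤ 1`, and with `I/I²` free
over `R/I`. -/
def IsUlrich [IsLocalRing R] (d : ℕ) (I : Ideal R) : Prop :=
  I.radical = IsLocalRing.maximalIdeal R ∧
  (∃ J : Ideal R, IsParamIdeal d J ∧ IsReduction J I R ∧ redNum J I R ≤ 1) ∧
  Module.Free (R ⧸ I) I.Cotangent

/-- `R` is a Gorenstein local ring of dimension `d`: it admits a regular sequence of
length `d` in the maximal ideal (so it is Cohen-Macaulay) such that the socle of the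
quotient is one-dimensional. -/
def IsGorenstein (R : Type*) [CommRing R] [IsLocalRing R] (d : ℕ) : Prop :=
  ringKrullDim R = d ∧ ∃ f : Fin d → R,
    (∀ i, f i ∈ IsLocalRing.maximalIdeal R) ∧ IsRegSeqOn f R ∧
    lenNat R (mcolon (⊥ : Submodule R (R ⧸ Ideal.span (Set.range f)))
      (IsLocalRing.maximalIdeal R)) = 1

/-- The minimal number of generators of an ideal. -/
def numGen (I : Ideal R) : ℕ :=
  sInf {k : ℕ | ∃ f : Fin k → R, Ideal.span (Set.range f) = I}

/-- `x` lies in the integral closure of the ideal `I`: it satisfies an equation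
`x^m + a_1 x^{m-1} + ⋯ + a_m = 0` with `a_i ∈ I^i`. -/
def memIntClosure (I : Ideal R) (x : R) : Prop :=
  ∃ m : ℕ, 0 < m ∧ ∃ a : ℕ → R, (∀ i, 1 ≤ i → i ≤ m → a i ∈ I ^ i) ∧
    x ^ m + ∑ i ∈ Finset.Icc 1 m, a i * x ^ (m - i) = 0

/-- `I` is integrally closed. -/
def IsIntClosed (I : Ideal R) : Prop := ∀ x : R, memIntClosure I x → x ∈ I

/-- `I` is a normal ideal: all powers `I^j`, `j ≥ 1`, are integrally closed. -/
def IsNormalIdeal (I : Ideal R) : Prop := ∀ j : ℕ, 1 ≤ j → IsIntClosed (I ^ j)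

/-- The ideal of positive-degree elements of the Rees algebra `R[It] ⊆ R[t]`. -/
def reesPos (I : Ideal R) : Ideal (reesAlgebra I) :=
  RingHom.ker ((Polynomial.evalRingHom (0 : R)).comp (Subalgebra.val (reesAlgebra I)).toRingHom)

/-- The associated graded ring `G(I) = R(I)/I·R(I)`. -/
def agr (I : Ideal R) : Type _ :=
  reesAlgebra I ⧸ (Ideal.map (algebraMap R (reesAlgebra I)) I)

instance (I : Ideal R) : CommRing (agr I) :=
  inferInstanceAs (CommRing (reesAlgebra I ⧸ (Ideal.map (algebraMap R (reesAlgebra I)) I)))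

/-- The irrelevant ideal `G(I)_+` of the associated graded ring. -/
def agrPos (I : Ideal R) : Ideal (agr I) :=
  Ideal.map (Ideal.Quotient.mk (Ideal.map (algebraMap R (reesAlgebra I)) I)) (reesPos I)

end RRPaper

lemma mem_mcolon' {R M : Type*} [CommRing R] [AddCommGroup M] [Module R M]
    {N : Submodule R M} {J : Ideal R} {y : M} :
    y ∈ mcolon N J ↔ ∀ a ∈ J, a • y ∈ N := Iff.rfl

lemma rrc_piece_mono {R M : Type*} [CommRing R] [AddCommGroup M] [Module R M]
    (I : Ideal R) (m : ℕ) :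
    Monotone (fun n : ℕ => mcolon ((I ^ (m + n + 1)) • (⊤ : Submodule R M)) (I ^ (n + 1))) := by
  apply monotone_nat_of_le_succ
  intro n y hy
  rw [mem_mcolon'] at hy ⊢
  intro a ha
  have ha' : a ∈ I ^ (n + 1) * I := by rw [← pow_succ]; exact ha
  have hidx : m + (n + 1) + 1 = (m + n + 1) + 1 := by omega
  rw [hidx]
  refine Submodule.mul_induction_on ha' ?_ ?_
  · intro b hb c hc
    rw [mul_comm b c, mul_smul, pow_succ', ← Ideal.smul_eq_mul, Submodule.smul_assoc]
    exact Submodule.smul_mem_smul hc (hy b hb)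
  · intro u v hu hv
    rw [add_smul]
    exact Submodule.add_mem _ hu hv

lemma mem_rrc_iff {R M : Type*} [CommRing R] [AddCommGroup M] [Module R M]
    (I : Ideal R) (m : ℕ) (y : M) :
    y ∈ rrc I M m ↔
      ∃ n : ℕ, y ∈ mcolon ((I ^ (m + n + 1)) • (⊤ : Submodule R M)) (I ^ (n + 1)) := by
  rw [rrc]
  exact Submodule.mem_iSup_of_directed _ ((rrc_piece_mono I m).directed_le)

/-- colon of Ratliff-Rush closures by a superficial element. -/
theorem rr_colon_superficial {R : Type*} [CommRing R] [IsNoetherianRing R] [IsLocalRing R]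
    {M : Type*} [AddCommGroup M] [Module R M] [Module.Finite R M]
    (I : Ideal R) (hreg : ∃ a ∈ I, ∀ x : M, a • x = 0 → x = 0) :
    ∀ m : ℕ, ∀ x : R, IsSuperficial I M x →
      mcolon (rrc I M (m + 1)) (Ideal.span {x}) = rrc I M m := by
  intro m x hx
  obtain ⟨hxI, c, hc⟩ := hx
  apply le_antisymm
  · intro y hy
    have hxy : x • y ∈ rrc I M (m + 1) := hy x (Ideal.mem_span_singleton_self x)
    rw [mem_rrc_iff] at hxy
    obtain ⟨n₀, hn₀⟩ := hxy
    set n := max n₀ c with hn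
    have h1 : x • y ∈ mcolon ((I ^ (m + 1 + n + 1)) • (⊤ : Submodule R M)) (I ^ (n + 1)) :=
      rrc_piece_mono I (m + 1) (le_max_left n₀ c) hn₀
    rw [mem_rrc_iff]
    refine ⟨n, ?_⟩
    rw [mem_mcolon']
    intro a ha
    have key := hc (m + n + 1) (by omega)
    rw [← key, Submodule.mem_inf]
    constructor
    · rw [mem_mcolon']
      intro b hb
      obtain ⟨r, rfl⟩ := Ideal.mem_span_singleton'.mp hb
      have h2 : a • (x • y) ∈ (I ^ (m + 1 + n + 1)) • (⊤ : Submodule R M) :=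
        h1 a ha
      have hidx : m + 1 + n + 1 = m + n + 1 + 1 := by omega
      rw [hidx] at h2
      have : (r * x) • a • y = r • (a • (x • y)) := by
        rw [mul_smul, smul_comm x a y]
      rw [this]
      exact Submodule.smul_mem _ r h2
    · have hle : I ^ (n + 1) ≤ I ^ c :=
        Ideal.pow_le_pow_right (by omega)
      exact Submodule.smul_mem_smul (hle ha) Submodule.mem_top
  · intro y hy
    rw [mem_mcolon']
    intro a ha
    obtain ⟨r, rfl⟩ := Ideal.mem_span_singleton'.mp ha
    rw [mem_rrc_iff] at hy
    obtain ⟨n, hn⟩ := hy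
    have hxy : x • y ∈ rrc I M (m + 1) := by
      rw [mem_rrc_iff]
      refine ⟨n, ?_⟩
      rw [mem_mcolon']
      intro b hb
      have h1 : b • y ∈ (I ^ (m + n + 1)) • (⊤ : Submodule R M) := hn b hb
      have h2 : x • (b • y) ∈ I • (I ^ (m + n + 1)) • (⊤ : Submodule R M) :=
        Submodule.smul_mem_smul hxI h1
      rw [← Submodule.smul_assoc, Ideal.smul_eq_mul, ← pow_succ'] at h2
      have hidx : m + 1 + n + 1 = m + n + 1 + 1 := by omega
      rw [hidx, smul_comm b x y]
      exact h2
    rw [mul_smul]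
    exact Submodule.smul_mem _ r hxy
end

section
/- Let R be a Noetherian ring, I an ideal of R, M a finitely generated R-module, and J = (x_1, …, x_s) a reduction of I relative to M. Fix an integer ℓ ≥ r_J(I, M) and suppose that [(x_1, …, x_{i−1})M :_M x_i] ∩ I^{ℓ+1}M = (x_1, …, x_{i−1})I^ℓM for i = 1, …, s. Then for all n ≥ ℓ + 1 one has [(x_1, …, x_{i−1})M :_M x_i] ∩ I^nM = (x_1, …, x_{i−1})I^{n−1}M for i = 1, …, s. -/
/- Preamble: self-contained definitions for reduction numbers, Ratliff-Rush closures,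
Castelnuovo-Mumford regularity of blowup modules (via the graded Čech/Koszul-colimit
description of local cohomology with respect to the irrelevant ideal), Hilbert-Samuel
functions/polynomials, postulation numbers, depth, Cohen-Macaulayness, Buchsbaum rings,
Ulrich ideals, Gorenstein rings, and integral closure of ideals. -/

open Classical

section AuxRR
variable {R : Type*} [CommRing R] {M : Type*} [AddCommGroup M] [Module R M]

lemma RRaux.mem_mcolon_singleton {N : Submodule R M} {a : R} {z : M} :
    z ∈ mcolon N (Ideal.span {a}) ↔ a • z ∈ N := by
  constructor
  · intro h; exact h a (Ideal.subset_span rfl)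
  · intro h b hb
    rw [Ideal.mem_span_singleton'] at hb
    obtain ⟨c, rfl⟩ := hb
    rw [mul_smul]; exact N.smul_mem c h

lemma RRaux.exists_of_mem_span_singleton_smul {a : R} {N : Submodule R M} {z : M}
    (h : z ∈ Ideal.span {a} • N) : ∃ u ∈ N, a • u = z := by
  refine Submodule.smul_induction_on h ?_ ?_
  · intro r hr n hn
    rw [Ideal.mem_span_singleton'] at hr
    obtain ⟨c, rfl⟩ := hr
    exact ⟨c • n, N.smul_mem c hn, by rw [smul_smul, mul_comm]⟩
  · rintro y z ⟨u, hu, rfl⟩ ⟨v, hv, rfl⟩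
    exact ⟨u + v, Submodule.add_mem N hu hv, smul_add a u v⟩

lemma RRaux.pow_succ_smul (I : Ideal R) (n : ℕ) (N : Submodule R M) :
    (I ^ (n + 1)) • N = I • ((I ^ n) • N) := by
  rw [pow_succ', ← Submodule.smul_assoc, smul_eq_mul]

lemma RRaux.ideal_smul_comm (I J : Ideal R) (N : Submodule R M) :
    I • (J • N) = J • (I • N) := by
  rw [← Submodule.smul_assoc, ← Submodule.smul_assoc, smul_eq_mul, smul_eq_mul, mul_comm]

/-- Natural-index version of the partial span ideals. -/
lemma RRaux.span_lt_eq {s : ℕ} (x : Fin s → R) (i : Fin s) :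
    Ideal.span (x '' {j | j < i}) = Ideal.span (x '' {j : Fin s | (j : ℕ) < (i : ℕ)}) := by
  congr 1

/-- The peeling lemma: descend from `(x_{<t}) I^n M` to `(x_{<i}) I^n M` for
`z ∈ (x_{<i}) M`, using the colon conditions in degree `n`. -/
lemma RRaux.peel {R : Type*} [CommRing R] {M : Type*} [AddCommGroup M] [Module R M]
    (I : Ideal R) {s : ℕ} (x : Fin s → R) (hxI : ∀ k, x k ∈ I) {n : ℕ} (hn : 1 ≤ n)
    (VV : ∀ t : Fin s,
      mcolon ((Ideal.span (x '' {j | j < t})) • (⊤ : Submodule R M)) (Ideal.span {x t})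
          ⊓ ((I ^ n) • ⊤)
        = (Ideal.span (x '' {j | j < t})) • ((I ^ (n - 1)) • (⊤ : Submodule R M)))
    {z : M} (i : ℕ) :
    ∀ t : ℕ, i ≤ t → t ≤ s →
    z ∈ (Ideal.span (x '' {j : Fin s | (j : ℕ) < i})) • (⊤ : Submodule R M) →
    z ∈ (Ideal.span (x '' {j : Fin s | (j : ℕ) < t})) • ((I ^ n) • (⊤ : Submodule R M)) →
    z ∈ (Ideal.span (x '' {j : Fin s | (j : ℕ) < i})) • ((I ^ n) • (⊤ : Submodule R M)) := by
  intro t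
  induction t with
  | zero => intro hit _ _ hz2; obtain rfl : i = 0 := Nat.le_zero.mp hit; exact hz2
  | succ t ih =>
    intro hit hts hz1 hz2
    rcases Nat.lt_or_ge i (t + 1) with hlt | hge
    · -- i ≤ t, peel off index t
      have hit' : i ≤ t := Nat.lt_succ_iff.mp hlt
      have hts' : t < s := hts
      set tf : Fin s := ⟨t, hts'⟩ with htf
      have hset : {j : Fin s | (j : ℕ) < t + 1} = {j : Fin s | (j : ℕ) < t} ∪ {tf} := by
        ext j
        simp only [Set.mem_setOf_eq, Set.mem_union, Set.mem_singleton_iff]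
        constructor
        · intro hj
          rcases Nat.lt_or_ge (j : ℕ) t with h | h
          · exact Or.inl h
          · refine Or.inr (Fin.ext ?_)
            simp only [htf]
            omega
        · rintro (h | rfl)
          · exact Nat.lt_succ_of_lt h
          · exact Nat.lt_succ_self t
      have hsplit : Ideal.span (x '' {j : Fin s | (j : ℕ) < t + 1})
          = Ideal.span (x '' {j : Fin s | (j : ℕ) < t}) ⊔ Ideal.span {x tf} := by
        rw [hset, Set.image_union, Set.image_singleton, Ideal.span_union]
      rw [hsplit, Submodule.sup_smul] at hz2
      obtain ⟨w, hw, v, hv, rfl⟩ := Submodule.mem_sup.mp hz2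
      obtain ⟨u, hu, rfl⟩ := RRaux.exists_of_mem_span_singleton_smul hv
      -- x tf • u ∈ (x_{<t}) M
      have hcol : x tf • u ∈ (Ideal.span (x '' {j : Fin s | (j : ℕ) < t}))
          • (⊤ : Submodule R M) := by
        have h1 : w + x tf • u - w ∈ (Ideal.span (x '' {j : Fin s | (j : ℕ) < t}))
            • (⊤ : Submodule R M) := by
          refine Submodule.sub_mem _ ?_ (Submodule.smul_mono le_rfl le_top hw)
          refine Submodule.smul_mono ?_ le_top hz1
          exact Ideal.span_mono (Set.image_mono (fun j hj => lt_of_lt_of_le hj hit'))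
        simpa using h1
      -- apply the colon condition at index tf
      have hJt : Ideal.span (x '' {j | j < tf})
          = Ideal.span (x '' {j : Fin s | (j : ℕ) < t}) := by
        congr 1
      have humem : u ∈ Ideal.span (x '' {j : Fin s | (j : ℕ) < t})
          • ((I ^ (n - 1)) • (⊤ : Submodule R M)) := by
        rw [← hJt, ← VV tf]
        refine Submodule.mem_inf.mpr ⟨?_, hu⟩
        rw [RRaux.mem_mcolon_singleton, hJt]
        exact hcol
      have key : ∀ y : M, y ∈ Ideal.span (x '' {j : Fin s | (j : ℕ) < t})
            • ((I ^ (n - 1)) • (⊤ : Submodule R M)) →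
          x tf • y ∈ Ideal.span (x '' {j : Fin s | (j : ℕ) < t})
            • ((I ^ n) • (⊤ : Submodule R M)) := by
        intro y hy
        refine Submodule.smul_induction_on
          (p := fun y => x tf • y ∈ Ideal.span (x '' {j : Fin s | (j : ℕ) < t})
            • ((I ^ n) • (⊤ : Submodule R M))) hy ?_ ?_
        · intro r hr m hm
          rw [smul_comm (x tf) r m]
          refine Submodule.smul_mem_smul hr ?_
          have h2 : x tf • m ∈ I • ((I ^ (n - 1)) • (⊤ : Submodule R M)) :=
            Submodule.smul_mem_smul (hxI tf) hm
          rwa [← RRaux.pow_succ_smul, Nat.sub_add_cancel hn] at h2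
        · intro y z hy hz
          rw [smul_add]
          exact Submodule.add_mem _ hy hz
      have hz2' : w + x tf • u ∈ (Ideal.span (x '' {j : Fin s | (j : ℕ) < t}))
          • ((I ^ n) • (⊤ : Submodule R M)) := Submodule.add_mem _ hw (key u humem)
      exact ih hit' (le_of_lt hts') hz1 hz2'
    · -- i = t + 1
      obtain rfl : i = t + 1 := le_antisymm hit hge
      exact hz2

end AuxRR

/-- propagation of colon-intersection equalities above the reduction
number. -/
theorem colon_inter_propagates {R : Type*} [CommRing R] [IsNoetherianRing R]
    {M : Type*} [AddCommGroup M] [Module R M] [Module.Finite R M]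
    (I : Ideal R) {s : ℕ} (x : Fin s → R)
    (hred : IsReduction (Ideal.span (Set.range x)) I M)
    (ℓ : ℕ) (hℓ : redNum (Ideal.span (Set.range x)) I M ≤ ℓ)
    (hyp : ∀ i : Fin s,
      mcolon ((Ideal.span (x '' {j | j < i})) • (⊤ : Submodule R M)) (Ideal.span {x i})
          ⊓ ((I ^ (ℓ + 1)) • ⊤)
        = (Ideal.span (x '' {j | j < i})) • ((I ^ ℓ) • (⊤ : Submodule R M))) :
    ∀ n : ℕ, ℓ + 1 ≤ n → ∀ i : Fin s,
      mcolon ((Ideal.span (x '' {j | j < i})) • (⊤ : Submodule R M)) (Ideal.span {x i})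
          ⊓ ((I ^ n) • ⊤)
        = (Ideal.span (x '' {j | j < i})) • ((I ^ (n - 1)) • (⊤ : Submodule R M)) := by
  set J := Ideal.span (Set.range x) with hJ
  have hxJ : ∀ k, x k ∈ J := fun k => Ideal.subset_span ⟨k, rfl⟩
  have hxI : ∀ k, x k ∈ I := fun k => hred.1 (hxJ k)
  have hJI : ∀ k : Fin s, Ideal.span (x '' {j | j < k}) ≤ I := fun k => by
    rw [Ideal.span_le]
    rintro a ⟨j, _, rfl⟩
    exact hxI j
  -- reduction identity for all m ≥ redNum
  have hr0 : J • ((I ^ (redNum J I M)) • (⊤ : Submodule R M))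
      = (I ^ (redNum J I M + 1)) • ⊤ := Nat.sInf_mem hred.2
  have hr : ∀ m, redNum J I M ≤ m →
      J • ((I ^ m) • (⊤ : Submodule R M)) = (I ^ (m + 1)) • ⊤ := by
    intro m hm
    induction m, hm using Nat.le_induction with
    | base => exact hr0
    | succ m _ ihm =>
      calc J • ((I ^ (m + 1)) • (⊤ : Submodule R M))
          = J • (I • ((I ^ m) • (⊤ : Submodule R M))) := by
            rw [RRaux.pow_succ_smul]
        _ = I • (J • ((I ^ m) • (⊤ : Submodule R M))) := RRaux.ideal_smul_comm J I _
        _ = I • ((I ^ (m + 1)) • (⊤ : Submodule R M)) := by rw [ihm]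
        _ = (I ^ (m + 1 + 1)) • ⊤ := (RRaux.pow_succ_smul I (m + 1) ⊤).symm
  -- main induction on n
  intro n hn
  induction n, hn using Nat.le_induction with
  | base =>
    intro i
    simpa using hyp i
  | succ n hn ihn =>
    intro i
    apply le_antisymm
    · -- hard direction
      rintro z ⟨hz1, hz2⟩
      have hzn : z ∈ (I ^ n) • (⊤ : Submodule R M) :=
        Submodule.smul_mono (Ideal.pow_le_pow_right (by omega)) le_rfl hz2
      have hz3 : z ∈ (Ideal.span (x '' {j | j < i}))
          • ((I ^ (n - 1)) • (⊤ : Submodule R M)) := by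
        rw [← ihn i]; exact ⟨hz1, hzn⟩
      have hz4 : z ∈ (Ideal.span (x '' {j : Fin s | (j : ℕ) < (i : ℕ)}))
          • (⊤ : Submodule R M) := by
        rw [← RRaux.span_lt_eq]
        exact Submodule.smul_mono le_rfl le_top hz3
      have hz5 : z ∈ (Ideal.span (x '' {j : Fin s | (j : ℕ) < s}))
          • ((I ^ n) • (⊤ : Submodule R M)) := by
        have hset : (x '' {j : Fin s | (j : ℕ) < s}) = Set.range x := by
          ext a
          constructor
          · rintro ⟨j, _, rfl⟩; exact ⟨j, rfl⟩
          · rintro ⟨j, rfl⟩; exact ⟨j, j.isLt, rfl⟩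
        rw [hset, ← hJ, hr n (le_trans hℓ (by omega))]
        exact hz2
      have hfin := RRaux.peel I x hxI (by omega : 1 ≤ n) ihn (i : ℕ) s i.isLt.le le_rfl hz4 hz5
      rw [RRaux.span_lt_eq x i]
      simpa [Nat.add_sub_cancel] using hfin
    · -- easy direction
      rintro z hz
      refine Submodule.mem_inf.mpr ⟨?_, ?_⟩
      · intro a _
        have hz' : z ∈ (Ideal.span (x '' {j | j < i})) • (⊤ : Submodule R M) :=
          Submodule.smul_mono le_rfl le_top hz
        exact Submodule.smul_mem _ a hz'
      · have hle : (Ideal.span (x '' {j | j < i}))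
            • ((I ^ (n + 1 - 1)) • (⊤ : Submodule R M))
            ≤ I • ((I ^ n) • (⊤ : Submodule R M)) := by
          refine Submodule.smul_mono (hJI i) ?_
          simp [Nat.add_sub_cancel]
        rw [← RRaux.pow_succ_smul] at hle
        exact hle hz
end
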